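/- For all even n ≥ 2 and 1 ≤ k ≤ n/2, the number of words of length n in the language generated by S → ā S b U | ε, U → a U b U | ε, with exactly k occurrences of ā (hence n/2 - k occurrences of a and n/2 occurrences of b) equals C(n-k-1, n/2 - 1) - C(n-k-1, n/2). -/

import Mathlib

inductive NC : Type
  | a | abar | b
deriving DecidableEq

mutual
/-- S → ā S b U | ε -/
inductive IsSnc : List NC → Prop
  | nil : IsSnc []
  | node {w v : List NC} : IsSnc w → IsUnc v →
      IsSnc (NC.abar :: w ++ NC.b :: v)
/-- U → a U b U | ε -/
inductive IsUnc : List NC → Prop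
  | nil : IsUnc []
  | node {w v : List NC} : IsUnc w → IsUnc v →
      IsUnc (NC.a :: w ++ NC.b :: v)
end

/-- `OkP h w` : `w` is a lattice path from height `h` to `0`, where `a` goes up
and `b` goes down, never going below 0, using only letters `a`, `b`. -/
inductive OkP : ℕ → List NC → Prop
  | nil : OkP 0 []
  | consa {h w} : OkP (h+1) w → OkP h (NC.a :: w)
  | consb {h w} : OkP h w → OkP (h+1) (NC.b :: w)

/-- number of such paths of length ℓ from height h -/
def Dnum : ℕ → ℕ → ℕ
  | 0, 0 => 1
  | 0, _+1 => 0
  | ℓ+1, 0 => Dnum ℓ 1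
  | ℓ+1, h+1 => Dnum ℓ (h+2) + Dnum ℓ h

/-- the finset of such paths -/
def Fs : ℕ → ℕ → Finset (List NC)
  | 0, 0 => {[]}
  | 0, _+1 => ∅
  | ℓ+1, 0 => (Fs ℓ 1).image (NC.a :: ·)
  | ℓ+1, h+1 => (Fs ℓ (h+2)).image (NC.a :: ·) ∪ (Fs ℓ h).image (NC.b :: ·)

lemma mem_Fs : ∀ ℓ h (w : List NC), w ∈ Fs ℓ h ↔ OkP h w ∧ w.length = ℓ := by
  intro ℓ
  induction ℓ with
  | zero =>
    intro h w
    cases h with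
    | zero =>
      simp only [Fs, Finset.mem_singleton, List.length_eq_zero_iff]
      constructor
      · rintro rfl; exact ⟨OkP.nil, rfl⟩
      · rintro ⟨_, rfl⟩; rfl
    | succ h =>
      simp only [Fs, Finset.notMem_empty, false_iff, not_and, List.length_eq_zero_iff]
      intro hw h2; subst h2; cases hw
  | succ ℓ ih =>
    intro h w
    cases h with
    | zero =>
      simp only [Fs, Finset.mem_image]
      constructor
      · rintro ⟨w', hw', rfl⟩
        obtain ⟨h1, h2⟩ := (ih 1 w').1 hw'
        exact ⟨OkP.consa h1, by simp [h2]⟩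
      · rintro ⟨hw, hl⟩
        cases hw with
        | nil => simp at hl
        | consa h1 =>
          rename_i w'
          exact ⟨w', (ih 1 w').2 ⟨h1, by simpa using hl⟩, rfl⟩
    | succ h =>
      simp only [Fs, Finset.mem_union, Finset.mem_image]
      constructor
      · rintro (⟨w', hw', rfl⟩ | ⟨w', hw', rfl⟩)
        · obtain ⟨h1, h2⟩ := (ih _ w').1 hw'
          exact ⟨OkP.consa h1, by simp [h2]⟩
        · obtain ⟨h1, h2⟩ := (ih _ w').1 hw'
          exact ⟨OkP.consb h1, by simp [h2]⟩
      · rintro ⟨hw, hl⟩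
        cases hw with
        | consa h1 =>
          rename_i w'
          exact Or.inl ⟨w', (ih _ w').2 ⟨h1, by simpa using hl⟩, rfl⟩
        | consb h1 =>
          rename_i w'
          exact Or.inr ⟨w', (ih _ w').2 ⟨h1, by simpa using hl⟩, rfl⟩

lemma card_Fs : ∀ ℓ h, (Fs ℓ h).card = Dnum ℓ h := by
  intro ℓ
  induction ℓ with
  | zero => intro h; cases h <;> simp [Fs, Dnum]
  | succ ℓ ih =>
    intro h
    cases h with
    | zero =>
      rw [show Fs (ℓ+1) 0 = (Fs ℓ 1).image (NC.a :: ·) from rfl, Dnum,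
        Finset.card_image_of_injective _ (fun x y h => by simpa using h), ih]
    | succ h =>
      rw [show Fs (ℓ+1) (h+1) = (Fs ℓ (h+2)).image (NC.a :: ·) ∪ (Fs ℓ h).image (NC.b :: ·)
          from rfl, Dnum,
        Finset.card_union_of_disjoint, Finset.card_image_of_injective _
          (fun x y h => by simpa using h),
        Finset.card_image_of_injective _ (fun x y h => by simpa using h), ih, ih]
      rw [Finset.disjoint_left]
      rintro x hx hy
      simp only [Finset.mem_image] at hx hy
      obtain ⟨_, _, rfl⟩ := hx
      obtain ⟨_, _, h⟩ := hy
      exact absurd h (by simp)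

lemma okp_app {m w} (hw : OkP m w) : ∀ {h s}, OkP h s → OkP (m + h) (w ++ s) := by
  induction hw with
  | nil => intro h s hs; simpa using hs
  | consa _ ih => intro h s hs; have := ih hs; exact OkP.consa (by simpa [Nat.add_right_comm] using this)
  | consb _ ih => intro h s hs; have := ih hs; exact (by simpa [Nat.add_right_comm] using OkP.consb this)

lemma okp_split : ∀ (t : List NC) {h}, OkP (h+1) t →
    ∃ t' v, t = t' ++ NC.b :: v ∧ OkP h t' ∧ OkP 0 v := by
  intro t
  induction t with
  | nil => intro h ht; cases ht
  | cons x rest ih =>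
    intro h ht
    cases ht with
    | consa hr =>
      obtain ⟨t', v, rfl, h1, h2⟩ := ih hr
      exact ⟨NC.a :: t', v, rfl, OkP.consa h1, h2⟩
    | consb hr =>
      cases h with
      | zero => exact ⟨[], rest, rfl, OkP.nil, hr⟩
      | succ h'' =>
        obtain ⟨t', v, rfl, h1, h2⟩ := ih hr
        exact ⟨NC.b :: t', v, rfl, OkP.consb h1, h2⟩

lemma unc_iff (v : List NC) : IsUnc v ↔ OkP 0 v := by
  suffices H : ∀ n (v : List NC), v.length = n → (IsUnc v ↔ OkP 0 v) from H _ v rfl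
  clear v
  intro n
  induction n using Nat.strong_induction_on with
  | _ n ih =>
  intro v hn
  constructor
  · intro hv
    cases hv with
    | nil => exact OkP.nil
    | @node w v' hw hv' =>
      have h1 : OkP 0 w := (ih w.length (by subst hn; simp) w rfl).1 hw
      have h2 : OkP 0 v' := (ih v'.length (by subst hn; simp; omega) v' rfl).1 hv'
      exact OkP.consa (okp_app h1 (OkP.consb h2))
  · intro hv
    cases hv with
    | nil => exact IsUnc.nil
    | consa hr =>
      rename_i w
      obtain ⟨t', u, rfl, h1, h2⟩ := okp_split w hr
      have i1 : IsUnc t' := (ih t'.length (by subst hn; simp) t' rfl).2 h1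
      have i2 : IsUnc u := (ih u.length (by subst hn; simp; omega) u rfl).2 h2
      exact IsUnc.node i1 i2

lemma okp_no_abar {h w} (hw : OkP h w) : NC.abar ∉ w := by
  induction hw with
  | nil => simp
  | consa _ ih => simp [ih]
  | consb _ ih => simp [ih]

lemma snc_of_okp : ∀ h (t : List NC), OkP h t →
    IsSnc (List.replicate (h+1) NC.abar ++ NC.b :: t) := by
  intro h
  induction h with
  | zero =>
    intro t ht
    have : IsSnc (NC.abar :: [] ++ NC.b :: t) := IsSnc.node IsSnc.nil ((unc_iff t).2 ht)
    simpa using this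
  | succ h ih =>
    intro t ht
    obtain ⟨t', v, rfl, h1, h2⟩ := okp_split t ht
    have := IsSnc.node (ih t' h1) ((unc_iff v).2 h2)
    have e : NC.abar :: (List.replicate (h+1) NC.abar ++ NC.b :: t') ++ NC.b :: v
        = List.replicate (h+1+1) NC.abar ++ NC.b :: (t' ++ NC.b :: v) := by
      simp [List.replicate_succ, List.append_assoc]
    rwa [e] at this

lemma snc_char (w : List NC) : IsSnc w ↔
    w = [] ∨ ∃ h t, w = List.replicate (h+1) NC.abar ++ NC.b :: t ∧ OkP h t := by
  constructor
  · intro hw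
    suffices H : ∀ n (w : List NC), w.length = n → IsSnc w →
        w = [] ∨ ∃ h t, w = List.replicate (h+1) NC.abar ++ NC.b :: t ∧ OkP h t from
      H _ w rfl hw
    clear hw w
    intro n
    induction n using Nat.strong_induction_on with
    | _ n ih =>
    intro w hn hw
    cases hw with
    | nil => exact Or.inl rfl
    | @node w' v hw' hv =>
      right
      rcases ih w'.length (by subst hn; simp) w' rfl hw' with h0 | ⟨h, t, rfl, ht⟩
      · subst h0
        exact ⟨0, v, by simp, (unc_iff v).1 hv⟩
      · refine ⟨h+1, t ++ NC.b :: v, ?_, okp_app ht (OkP.consb ((unc_iff v).1 hv))⟩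
        simp [List.replicate_succ, List.append_assoc]
  · rintro (rfl | ⟨h, t, rfl, ht⟩)
    · exact IsSnc.nil
    · exact snc_of_okp h t ht

lemma Dnum_zero : ∀ ℓ h, ℓ < h → Dnum ℓ h = 0 := by
  intro ℓ
  induction ℓ with
  | zero => intro h hh; cases h with | zero => omega | succ h => rfl
  | succ ℓ ih =>
    intro h hh
    cases h with
    | zero => omega
    | succ h => rw [Dnum, ih _ (by omega), ih _ (by omega)]

lemma Dnum_eq : ∀ ℓ h r, ℓ = h + 2*r →
    Dnum ℓ h + Nat.choose ℓ (h+r+1) = Nat.choose ℓ r := by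
  intro ℓ
  induction ℓ with
  | zero =>
    intro h r he
    obtain ⟨rfl, rfl⟩ : h = 0 ∧ r = 0 := by omega
    simp [Dnum]
  | succ ℓ ih =>
    intro h r he
    cases h with
    | zero =>
      obtain ⟨rr, rfl⟩ : ∃ rr, r = rr + 1 := ⟨r - 1, by omega⟩
      have h1 := ih 1 rr (by omega)
      rw [show 1+rr+1 = rr+2 by omega] at h1
      rw [show (0:ℕ)+(rr+1)+1 = rr+2 by omega]
      have p1 : Nat.choose (ℓ+1) (rr+2) = Nat.choose ℓ (rr+1) + Nat.choose ℓ (rr+2) :=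
        Nat.choose_succ_succ _ _
      have p2 : Nat.choose (ℓ+1) (rr+1) = Nat.choose ℓ rr + Nat.choose ℓ (rr+1) :=
        Nat.choose_succ_succ _ _
      rw [show Dnum (ℓ+1) 0 = Dnum ℓ 1 from rfl]
      omega
    | succ h =>
      rw [show Dnum (ℓ+1) (h+1) = Dnum ℓ (h+2) + Dnum ℓ h from rfl]
      cases r with
      | zero =>
        have hl : ℓ = h := by omega
        subst hl
        have h2 := ih ℓ 0 (by omega)
        have z1 : Dnum ℓ (ℓ+2) = 0 := Dnum_zero _ _ (by omega)
        have z2 : Nat.choose ℓ (ℓ+0+1) = 0 := Nat.choose_eq_zero_of_lt (by omega)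
        have z3 : Nat.choose (ℓ+1) (ℓ+1+0+1) = 0 := Nat.choose_eq_zero_of_lt (by omega)
        simp only [Nat.choose_zero_right] at h2 ⊢
        omega
      | succ rr =>
        have h1 := ih (h+2) rr (by omega)
        have h2 := ih h (rr+1) (by omega)
        rw [show h+2+rr+1 = h+rr+3 by omega] at h1
        rw [show h+(rr+1)+1 = h+rr+2 by omega] at h2
        rw [show h+1+(rr+1)+1 = h+rr+2+1 by omega]
        have p1 : Nat.choose (ℓ+1) (h+rr+2+1)
            = Nat.choose ℓ (h+rr+2) + Nat.choose ℓ (h+rr+2+1) := Nat.choose_succ_succ _ _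
        have p2 : Nat.choose (ℓ+1) (rr+1) = Nat.choose ℓ rr + Nat.choose ℓ (rr+1) :=
          Nat.choose_succ_succ _ _
        rw [show h+rr+2+1 = h+rr+3 by omega] at p1 ⊢
        omega

theorem nc_count (n k : ℕ) (hn : Even n) (hn2 : 2 ≤ n)
    (hk1 : 1 ≤ k) (hk2 : k ≤ n / 2) :
    Set.ncard {w : List NC |
        IsSnc w ∧ w.length = n ∧ w.count NC.abar = k}
      = Nat.choose (n - k - 1) (n / 2 - 1) - Nat.choose (n - k - 1) (n / 2) := by
  obtain ⟨m, hm⟩ := hn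
  have hm2 : n / 2 = m := by omega
  have hkm : k ≤ m := by omega
  have hm1 : 1 ≤ m := by omega
  have hset : {w : List NC | IsSnc w ∧ w.length = n ∧ w.count NC.abar = k}
      = (fun t => List.replicate k NC.abar ++ NC.b :: t) '' ↑(Fs (n-k-1) (k-1)) := by
    ext w
    simp only [Set.mem_setOf_eq, Set.mem_image, Finset.mem_coe, mem_Fs]
    constructor
    · rintro ⟨hs, hlen, hcnt⟩
      rcases (snc_char w).1 hs with rfl | ⟨h, t, rfl, ht⟩
      · simp at hcnt; omega
      · have hct : t.count NC.abar = 0 :=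
          List.count_eq_zero_of_not_mem (okp_no_abar ht)
        simp only [List.count_append, List.count_cons, List.count_replicate_self,
          hct] at hcnt
        simp only [List.length_append, List.length_replicate, List.length_cons] at hlen
        have hk : h + 1 = k := by
          simp at hcnt; omega
        refine ⟨t, ⟨by rw [show k - 1 = h by omega]; exact ht, by omega⟩, ?_⟩
        rw [show k = h + 1 by omega]
    · rintro ⟨t, ⟨ht, hlt⟩, rfl⟩
      have hkn : k + 1 ≤ n := by omega
      refine ⟨?_, ?_, ?_⟩
      · apply (snc_char _).2
        exact Or.inr ⟨k-1, t, by rw [show k - 1 + 1 = k by omega], ht⟩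
      · simp [hlt]; omega
      · have hct : t.count NC.abar = 0 :=
          List.count_eq_zero_of_not_mem (okp_no_abar ht)
        simp [List.count_cons, hct]
  rw [hset, Set.ncard_image_of_injective _ (fun x y hxy => by simpa using hxy),
    Set.ncard_coe_finset, card_Fs, hm2]
  have hD := Dnum_eq (n-k-1) (k-1) (m-k) (by omega)
  rw [show k-1+(m-k)+1 = m by omega] at hD
  have hsym := Nat.choose_symm (n := n-k-1) (k := m-1) (by omega)
  rw [show n-k-1-(m-1) = m-k by omega] at hsym
  omega
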